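/- Let a, b, c be the vertices of an equilateral triangle in the plane and let p be any fourth point distinct from a, b, c. Then the set {a, b, c, p} determines at least three distinct angle values in (0, π), where an angle value is |∠xyz| for distinct points x, y, z of the set. -/

import Mathlib

open EuclideanGeometry

noncomputable section

abbrev Pt : Type := EuclideanSpace ℝ (Fin 2)

/-- The point (x, y) in the Euclidean plane. -/
def pt (x y : ℝ) : Pt := (WithLp.equiv 2 (Fin 2 → ℝ)).symm ![x, y]

/-- The set of distinct angle values in (0, π) determined by a planar point set. -/
def angleSet (P : Set Pt) : Set ℝ :=
  {θ : ℝ | θ ∈ Set.Ioo 0 Real.pi ∧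
    ∃ x ∈ P, ∃ y ∈ P, ∃ z ∈ P, x ≠ y ∧ y ≠ z ∧ x ≠ z ∧ ∠ x y z = θ}

/- ### Auxiliary lemmas -/

lemma set_cyc (x y z : Pt) : ({y, z, x} : Set Pt) = {x, y, z} := by
  ext t; simp only [Set.mem_insert_iff, Set.mem_singleton_iff]; tauto

lemma set_swap12 (x y z : Pt) : ({y, x, z} : Set Pt) = {x, y, z} := by
  ext t; simp only [Set.mem_insert_iff, Set.mem_singleton_iff]; tauto

lemma set_swap23 (x y z : Pt) : ({x, z, y} : Set Pt) = {x, y, z} := by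
  ext t; simp only [Set.mem_insert_iff, Set.mem_singleton_iff]; tauto

/-- All angles of an equilateral triangle are π/3 (vertex form). -/
lemma equilateral_angle (x y z : Pt) (hxy : x ≠ y) (hyz : y ≠ z) (hzx : z ≠ x)
    (h1 : dist x y = dist y z) (h2 : dist y z = dist z x) : ∠ x y z = Real.pi / 3 := by
  have e1 : ∠ y x z = ∠ y z x := angle_eq_angle_of_dist_eq (by rw [dist_comm y x, h1])
  have e2 : ∠ x y z = ∠ x z y := angle_eq_angle_of_dist_eq (by rw [h1, h2, dist_comm])
  have hsum : ∠ y x z + ∠ x z y + ∠ z y x = Real.pi :=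
    angle_add_angle_add_angle_eq_pi z hxy
  have e3 : ∠ z y x = ∠ x y z := angle_comm z y x
  have e4 : ∠ y z x = ∠ x z y := angle_comm y z x
  linarith

/-- An equilateral triangle is not degenerate. -/
lemma noncol_equilateral (x y z : Pt) (hxy : x ≠ y) (hyz : y ≠ z) (hzx : z ≠ x)
    (h1 : dist x y = dist y z) (h2 : dist y z = dist z x) :
    ¬Collinear ℝ ({x, y, z} : Set Pt) := by
  intro hc
  have h3 := equilateral_angle x y z hxy hyz hzx h1 h2
  have hpi := Real.pi_pos
  rcases collinear_iff_eq_or_eq_or_angle_eq_zero_or_angle_eq_pi.mp hc with h | h | h | h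
  · exact hxy h
  · exact hyz h.symm
  · rw [h3] at h; linarith
  · rw [h3] at h; linarith

/-- Squared distance in coordinates. -/
lemma dist_sq_coords (x y : Pt) :
    dist x y ^ 2 = (x 0 - y 0) ^ 2 + (x 1 - y 1) ^ 2 := by
  rw [EuclideanSpace.dist_eq, Real.sq_sqrt (by positivity)]
  simp [Fin.sum_univ_two, Real.dist_eq, sq_abs]

/-- Coordinate impossibility: no point (taken as the origin) is at distance `√s` from all three
vertices of an equilateral triangle with side `√s`. -/
lemma coord_contra (a0 a1 b0 b1 c0 c1 : ℝ) (s : ℝ) (hs : 0 < s)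
    (hab : (a0 - b0) ^ 2 + (a1 - b1) ^ 2 = s) (hbc : (b0 - c0) ^ 2 + (b1 - c1) ^ 2 = s)
    (hca : (c0 - a0) ^ 2 + (c1 - a1) ^ 2 = s)
    (ha : a0 ^ 2 + a1 ^ 2 = s) (hb : b0 ^ 2 + b1 ^ 2 = s) (hc : c0 ^ 2 + c1 ^ 2 = s) :
    False := by
  have h1 : a0 * b0 + a1 * b1 = s / 2 := by linarith
  have h2 : b0 * c0 + b1 * c1 = s / 2 := by linarith
  have h3 : a0 * c0 + a1 * c1 = s / 2 := by linarith
  have key : (a0 ^ 2 + a1 ^ 2) * ((b0 ^ 2 + b1 ^ 2) * (c0 ^ 2 + c1 ^ 2) - (b0 * c0 + b1 * c1) ^ 2)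
      - (a0 * b0 + a1 * b1) *
        ((a0 * b0 + a1 * b1) * (c0 ^ 2 + c1 ^ 2) - (b0 * c0 + b1 * c1) * (a0 * c0 + a1 * c1))
      + (a0 * c0 + a1 * c1) *
        ((a0 * b0 + a1 * b1) * (b0 * c0 + b1 * c1) - (b0 ^ 2 + b1 ^ 2) * (a0 * c0 + a1 * c1))
      = 0 := by ring
  rw [ha, hb, hc, h1, h2, h3] at key
  nlinarith [pow_pos hs 3]

/-- No point is equidistant (at side length) from all vertices of an equilateral triangle. -/
lemma no_equidistant (a b c p : Pt) (hab : a ≠ b)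
    (h1 : dist a b = dist b c) (h2 : dist b c = dist c a)
    (d1 : dist p a = dist a b) (d2 : dist p b = dist a b) (d3 : dist p c = dist a b) :
    False := by
  have hs : 0 < dist a b ^ 2 := pow_pos (dist_pos.mpr hab) 2
  have eab : (a 0 - b 0) ^ 2 + (a 1 - b 1) ^ 2 = dist a b ^ 2 := (dist_sq_coords a b).symm
  have ebc : (b 0 - c 0) ^ 2 + (b 1 - c 1) ^ 2 = dist a b ^ 2 := by
    rw [show dist a b = dist b c from h1]; exact (dist_sq_coords b c).symm
  have eca : (c 0 - a 0) ^ 2 + (c 1 - a 1) ^ 2 = dist a b ^ 2 := by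
    rw [show dist a b = dist c a from h1.trans h2]; exact (dist_sq_coords c a).symm
  have epa : (p 0 - a 0) ^ 2 + (p 1 - a 1) ^ 2 = dist a b ^ 2 := by
    rw [← d1]; exact (dist_sq_coords p a).symm
  have epb : (p 0 - b 0) ^ 2 + (p 1 - b 1) ^ 2 = dist a b ^ 2 := by
    rw [← d2]; exact (dist_sq_coords p b).symm
  have epc : (p 0 - c 0) ^ 2 + (p 1 - c 1) ^ 2 = dist a b ^ 2 := by
    rw [← d3]; exact (dist_sq_coords p c).symm
  exact coord_contra (a 0 - p 0) (a 1 - p 1) (b 0 - p 0) (b 1 - p 1) (c 0 - p 0) (c 1 - p 1)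
    (dist a b ^ 2) hs (by linear_combination eab) (by linear_combination ebc)
    (by linear_combination eca) (by linear_combination epa) (by linear_combination epb)
    (by linear_combination epc)

/-- A point on the line of a segment at distance equal to the segment length from both
endpoints is impossible. -/
lemma collinear_case (x y q : Pt) (hxy : x ≠ y) (hqx : q ≠ x) (hqy : q ≠ y)
    (d1 : dist q x = dist x y) (d2 : dist q y = dist x y)
    (hcol : Collinear ℝ ({x, y, q} : Set Pt)) : False := by
  have hs : 0 < dist x y := dist_pos.mpr hxy
  have hcol' : Collinear ℝ ({x, q, y} : Set Pt) := by rw [set_swap23]; exact hcol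
  rcases collinear_iff_eq_or_eq_or_angle_eq_zero_or_angle_eq_pi.mp hcol' with h | h | h | h
  · exact hqx h.symm
  · exact hqy h.symm
  · rcases angle_eq_zero_iff_ne_and_wbtw.mp h with ⟨_, hw⟩ | ⟨_, hw⟩
    · have hd := dist_add_dist_eq_iff.mpr hw
      rw [d1, d2] at hd; linarith
    · have hd := dist_add_dist_eq_iff.mpr hw
      rw [d2, dist_comm y x, d1] at hd; linarith
  · have hsb := angle_eq_pi_iff_sbtw.mp h
    have hd := dist_add_dist_eq_iff.mpr hsb.wbtw
    rw [dist_comm x q, d1, d2] at hd; linarith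

theorem stmt0 (a b c p : Pt)
    (hab : a ≠ b) (hbc : b ≠ c) (hca : c ≠ a)
    (h1 : dist a b = dist b c) (h2 : dist b c = dist c a)
    (hpa : p ≠ a) (hpb : p ≠ b) (hpc : p ≠ c) :
    3 ≤ (angleSet {a, b, c, p}).ncard := by
  by_contra hlt
  push_neg at hlt
  have hle : (angleSet {a, b, c, p}).ncard ≤ 2 := by omega
  have hpi := Real.pi_pos
  -- finiteness of the angle set
  have hPfin : ({a, b, c, p} : Set Pt).Finite := by
    exact (Set.finite_singleton p).insert c |>.insert b |>.insert a
  have hfin : (angleSet ({a, b, c, p} : Set Pt)).Finite := by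
    apply Set.Finite.subset
      ((hPfin.prod (hPfin.prod hPfin)).image (fun t : Pt × Pt × Pt => ∠ t.1 t.2.1 t.2.2))
    rintro θ ⟨_, x, hx, y, hy, z, hz, _, _, _, rfl⟩
    exact ⟨(x, y, z), ⟨hx, hy, hz⟩, rfl⟩
  -- π/3 is an angle value
  have habc_eq : ∠ a b c = Real.pi / 3 := equilateral_angle a b c hab hbc hca h1 h2
  have hmem : Real.pi / 3 ∈ angleSet ({a, b, c, p} : Set Pt) :=
    ⟨⟨by linarith, by linarith⟩, a, by simp, b, by simp, c, by simp, hab, hbc, Ne.symm hca,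
      habc_eq⟩
  -- any two angle values: one is π/3 or they coincide
  have key : ∀ θ ∈ angleSet ({a, b, c, p} : Set Pt), ∀ θ' ∈ angleSet ({a, b, c, p} : Set Pt),
      θ = Real.pi / 3 ∨ θ' = Real.pi / 3 ∨ θ = θ' := by
    intro θ hθ θ' hθ'
    by_contra hcc
    push_neg at hcc
    obtain ⟨n1, n2, n3⟩ := hcc
    have hsub : ({Real.pi / 3, θ, θ'} : Set ℝ) ⊆ angleSet ({a, b, c, p} : Set Pt) := by
      intro t ht
      simp only [Set.mem_insert_iff, Set.mem_singleton_iff] at ht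
      rcases ht with rfl | rfl | rfl
      exacts [hmem, hθ, hθ']
    have h3 : ({Real.pi / 3, θ, θ'} : Set ℝ).ncard = 3 :=
      Set.ncard_eq_three.mpr ⟨_, _, _, Ne.symm n1, Ne.symm n2, n3, rfl⟩
    have := Set.ncard_le_ncard hsub hfin
    omega
  -- angles of any nondegenerate triangle on the four points all appear in the set
  have hmemS : ∀ x y z : Pt, x ∈ ({a, b, c, p} : Set Pt) → y ∈ ({a, b, c, p} : Set Pt) →
      z ∈ ({a, b, c, p} : Set Pt) → ¬Collinear ℝ ({x, y, z} : Set Pt) →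
      ∠ x y z ∈ angleSet ({a, b, c, p} : Set Pt) := by
    intro x y z hx hy hz hn
    have hxy : x ≠ y := by
      rintro rfl
      exact hn ((collinear_pair ℝ x z).subset (by intro t ht; simp at ht; simp; tauto))
    have hyz : y ≠ z := by
      rintro rfl
      exact hn ((collinear_pair ℝ x y).subset (by intro t ht; simp at ht; simp; tauto))
    have hxz : x ≠ z := by
      rintro rfl
      exact hn ((collinear_pair ℝ x y).subset (by intro t ht; simp at ht; simp; tauto))
    exact ⟨⟨angle_pos_of_not_collinear hn, angle_lt_pi_of_not_collinear hn⟩,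
      x, hx, y, hy, z, hz, hxy, hyz, hxz, rfl⟩
  -- every angle of a nondegenerate triangle on the four points is π/3
  have H : ∀ x y z : Pt, x ∈ ({a, b, c, p} : Set Pt) → y ∈ ({a, b, c, p} : Set Pt) →
      z ∈ ({a, b, c, p} : Set Pt) → ¬Collinear ℝ ({x, y, z} : Set Pt) →
      ∠ x y z = Real.pi / 3 := by
    intro x y z hx hy hz hn
    have hn2 : ¬Collinear ℝ ({y, z, x} : Set Pt) := by rw [set_cyc]; exact hn
    have hn3 : ¬Collinear ℝ ({z, x, y} : Set Pt) := by rw [set_cyc y z x]; exact hn2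
    have hxy : x ≠ y := by
      rintro rfl
      exact hn ((collinear_pair ℝ x z).subset (by intro t ht; simp at ht; simp; tauto))
    have hyz : y ≠ z := by
      rintro rfl
      exact hn ((collinear_pair ℝ x y).subset (by intro t ht; simp at ht; simp; tauto))
    have m1 := hmemS x y z hx hy hz hn
    have m2 := hmemS y z x hy hz hx hn2
    have m3 := hmemS z x y hz hx hy hn3
    have hsum : ∠ y z x + ∠ z x y + ∠ x y z = Real.pi :=
      angle_add_angle_add_angle_eq_pi x hyz.symm
    have k1 := key (∠ x y z) m1 (∠ y z x) m2
    have k2 := key (∠ x y z) m1 (∠ z x y) m3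
    have k3 := key (∠ y z x) m2 (∠ z x y) m3
    rcases k1 with h | h | h <;> rcases k2 with h' | h' | h' <;>
      rcases k3 with h'' | h'' | h'' <;> linarith
  -- hence any nondegenerate triangle on the four points is isosceles at each vertex
  have Hd : ∀ x y z : Pt, x ∈ ({a, b, c, p} : Set Pt) → y ∈ ({a, b, c, p} : Set Pt) →
      z ∈ ({a, b, c, p} : Set Pt) → ¬Collinear ℝ ({x, y, z} : Set Pt) →
      dist x y = dist x z := by
    intro x y z hx hy hz hn
    have hn23 : ¬Collinear ℝ ({x, z, y} : Set Pt) := by rw [set_swap23]; exact hn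
    have hn12 : ¬Collinear ℝ ({y, x, z} : Set Pt) := by rw [set_swap12]; exact hn
    have a1 : ∠ x y z = Real.pi / 3 := H x y z hx hy hz hn
    have a2 : ∠ x z y = Real.pi / 3 := H x z y hx hz hy hn23
    have a3 : ∠ y x z = Real.pi / 3 := H y x z hy hx hz hn12
    refine dist_eq_of_angle_eq_angle_of_angle_ne_pi (a1.trans a2.symm) ?_
    rw [a3]; intro hh; linarith
  have habc_ncol : ¬Collinear ℝ ({a, b, c} : Set Pt) :=
    noncol_equilateral a b c hab hbc hca h1 h2
  -- case analysis on degeneracies with p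
  by_cases h_ab : Collinear ℝ ({a, b, p} : Set Pt)
  · -- p on line ab
    have hnacp : ¬Collinear ℝ ({a, c, p} : Set Pt) := by
      intro hc
      have hb : b ∈ line[ℝ, a, p] :=
        h_ab.mem_affineSpan_of_mem_of_ne (by simp) (by simp) (by simp) hpa.symm
      have hc' : c ∈ line[ℝ, a, p] :=
        hc.mem_affineSpan_of_mem_of_ne (by simp) (by simp) (by simp) hpa.symm
      have hcol4 : Collinear ℝ ({b, c, a, p} : Set Pt) :=
        collinear_insert_insert_of_mem_affineSpan_pair hb hc'
      exact habc_ncol (hcol4.subset (by intro t ht; simp at ht; simp; tauto))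
    have hnbcp : ¬Collinear ℝ ({b, c, p} : Set Pt) := by
      intro hc
      have ha' : a ∈ line[ℝ, b, p] :=
        h_ab.mem_affineSpan_of_mem_of_ne (by simp) (by simp) (by simp) hpb.symm
      have hc' : c ∈ line[ℝ, b, p] :=
        hc.mem_affineSpan_of_mem_of_ne (by simp) (by simp) (by simp) hpb.symm
      have hcol4 : Collinear ℝ ({a, c, b, p} : Set Pt) :=
        collinear_insert_insert_of_mem_affineSpan_pair ha' hc'
      exact habc_ncol (hcol4.subset (by intro t ht; simp at ht; simp; tauto))
    have hd1 := Hd a c p (by simp) (by simp) (by simp) hnacp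
    have hd2 := Hd b c p (by simp) (by simp) (by simp) hnbcp
    have d1 : dist p a = dist a b := by
      rw [dist_comm p a, ← hd1, dist_comm a c, ← h2, ← h1]
    have d2 : dist p b = dist a b := by
      rw [dist_comm p b, ← hd2, ← h1]
    exact collinear_case a b p hab hpa hpb d1 d2 h_ab
  by_cases h_bc : Collinear ℝ ({b, c, p} : Set Pt)
  · -- p on line bc
    have hncap : ¬Collinear ℝ ({c, a, p} : Set Pt) := by
      intro hc
      have hb' : b ∈ line[ℝ, c, p] :=
        h_bc.mem_affineSpan_of_mem_of_ne (by simp) (by simp) (by simp) hpc.symm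
      have ha' : a ∈ line[ℝ, c, p] :=
        hc.mem_affineSpan_of_mem_of_ne (by simp) (by simp) (by simp) hpc.symm
      have hcol4 : Collinear ℝ ({b, a, c, p} : Set Pt) :=
        collinear_insert_insert_of_mem_affineSpan_pair hb' ha'
      exact habc_ncol (hcol4.subset (by intro t ht; simp at ht; simp; tauto))
    have hnbap : ¬Collinear ℝ ({b, a, p} : Set Pt) := by rw [set_swap12]; exact h_ab
    have hd1 := Hd b a p (by simp) (by simp) (by simp) hnbap
    have hd2 := Hd c a p (by simp) (by simp) (by simp) hncap
    have d1 : dist p b = dist b c := by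
      rw [dist_comm p b, ← hd1, dist_comm b a, h1]
    have d2 : dist p c = dist b c := by
      rw [dist_comm p c, ← hd2, ← h2]
    exact collinear_case b c p hbc hpb hpc d1 d2 h_bc
  by_cases h_ca : Collinear ℝ ({c, a, p} : Set Pt)
  · -- p on line ca
    have hncbp : ¬Collinear ℝ ({c, b, p} : Set Pt) := by rw [set_swap12]; exact h_bc
    have hd1 := Hd c b p (by simp) (by simp) (by simp) hncbp
    have hd2 := Hd a b p (by simp) (by simp) (by simp) h_ab
    have d1 : dist p c = dist c a := by
      rw [dist_comm p c, ← hd1, dist_comm c b, h2]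
    have d2 : dist p a = dist c a := by
      rw [dist_comm p a, ← hd2, h1, h2]
    exact collinear_case c a p hca hpc hpa d1 d2 h_ca
  · -- fully nondegenerate case: p equidistant from a, b, c at the side length
    have hd1 := Hd a b p (by simp) (by simp) (by simp) h_ab
    have hnbap : ¬Collinear ℝ ({b, a, p} : Set Pt) := by rw [set_swap12]; exact h_ab
    have hd2 := Hd b a p (by simp) (by simp) (by simp) hnbap
    have hd3 := Hd c a p (by simp) (by simp) (by simp) h_ca
    have d1 : dist p a = dist a b := by rw [dist_comm p a, ← hd1]
    have d2 : dist p b = dist a b := by rw [dist_comm p b, ← hd2, dist_comm b a]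
    have d3 : dist p c = dist a b := by rw [dist_comm p c, ← hd3, ← h2, ← h1]
    exact no_equidistant a b c p hab h1 h2 d1 d2 d3
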